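/- Let K be a field and A a finite-dimensional K-algebra with Jacobson radical J, generated as a K-algebra by a set G. If φ : A → A is a K-algebra homomorphism with φ(g) − g ∈ J² for every g ∈ G, then φ is a K-algebra automorphism of A. -/

import Mathlib

/-- The Jacobson radical of a (possibly noncommutative) ring is a right ideal. -/
lemma jac_mul_right {A : Type*} [Ring A] {x : A}
    (hx : x ∈ Ideal.jacobson (⊥ : Ideal A)) (a : A) :
    x * a ∈ Ideal.jacobson (⊥ : Ideal A) := by
  rw [Ideal.mem_jacobson_iff] at hx ⊢
  intro y
  obtain ⟨z, hz⟩ := hx (a * y)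
  rw [Ideal.mem_bot] at hz
  refine ⟨1 - y * x * z * a, ?_⟩
  rw [Ideal.mem_bot]
  have hz1 : z * (a * y * x) + z = 1 := by
    have h := sub_eq_zero.mp hz
    rw [← mul_assoc]
    exact h
  have key : (1 - y * x * z * a) * y * (x * a) + (1 - y * x * z * a) - 1
      = y * x * a - y * x * (z * (a * y * x) + z) * a := by noncomm_ring
  rw [key, hz1]
  noncomm_ring

/-- Noncommutative Nakayama lemma for finitely generated left ideals. -/
lemma nak_aux {A : Type*} [Ring A] :
    ∀ (n : ℕ) (s : Finset A), s.card = n →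
      Submodule.span A (s : Set A) ≤
        (Ideal.jacobson (⊥ : Ideal A)) • Submodule.span A (s : Set A) →
      Submodule.span A (s : Set A) = ⊥ := by
  intro n
  induction n with
  | zero =>
    intro s hs _
    rw [Finset.card_eq_zero.mp hs]
    simp
  | succ n ih =>
    classical
    intro s hcard hle
    obtain ⟨x, hxs⟩ := Finset.card_pos.mp (by omega : 0 < s.card)
    have hcoef : ∀ v ∈ (Ideal.jacobson (⊥ : Ideal A)) • Submodule.span A (s : Set A),
        ∃ c : A → A, (∀ i, c i ∈ Ideal.jacobson (⊥ : Ideal A)) ∧ v = ∑ i ∈ s, c i * i := by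
      intro v hv
      refine Submodule.smul_induction_on hv ?_ ?_
      · intro r hr m hm
        obtain ⟨f, -, hf⟩ := Submodule.mem_span_finset.mp hm
        refine ⟨fun i => r * f i, fun i => jac_mul_right hr (f i), ?_⟩
        rw [smul_eq_mul, ← hf, Finset.mul_sum]
        refine Finset.sum_congr rfl fun i _ => ?_
        rw [smul_eq_mul, mul_assoc]
      · rintro v w ⟨c, hc, rfl⟩ ⟨d, hd, rfl⟩
        exact ⟨fun i => c i + d i, fun i => add_mem (hc i) (hd i), by
          rw [← Finset.sum_add_distrib]
          exact Finset.sum_congr rfl fun i _ => (add_mul _ _ _).symm⟩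
    obtain ⟨c, hc, hx⟩ := hcoef x (hle (Submodule.subset_span hxs))
    -- extract a left inverse of `1 - c x`
    have hcx := hc x
    rw [Ideal.mem_jacobson_iff] at hcx
    obtain ⟨z, hz⟩ := hcx (-1)
    rw [Ideal.mem_bot] at hz
    have hzinv : z * (1 - c x) = 1 := by
      have h1 : z * (1 - c x) = z * -1 * c x + z - 1 + 1 := by noncomm_ring
      rw [h1, hz, zero_add]
    -- x lies in the span of `s.erase x`
    have hsum : x - c x * x = ∑ i ∈ s.erase x, c i * i := by
      have h : ∑ i ∈ s.erase x, c i * i + c x * x = ∑ i ∈ s, c i * i :=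
        Finset.sum_erase_add s _ hxs
      rw [sub_eq_iff_eq_add, h]
      exact hx
    have hx_mem : x ∈ Submodule.span A ((s.erase x : Finset A) : Set A) := by
      have hsum_mem : (x - c x * x) ∈ Submodule.span A ((s.erase x : Finset A) : Set A) := by
        rw [hsum]
        exact Submodule.sum_mem _ fun i hi =>
          Submodule.smul_mem _ (c i) (Submodule.subset_span hi)
      have hxe : x = z • (x - c x * x) := by
        rw [smul_eq_mul]
        have h2 : z * (x - c x * x) = z * (1 - c x) * x := by noncomm_ring
        rw [h2, hzinv, one_mul]
      have hm := Submodule.smul_mem (Submodule.span A ((s.erase x : Finset A) : Set A)) z hsum_mem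
      rwa [← hxe] at hm
    have hspan_eq : Submodule.span A (s : Set A)
        = Submodule.span A ((s.erase x : Finset A) : Set A) := by
      refine le_antisymm (Submodule.span_le.mpr ?_) (Submodule.span_mono ?_)
      · intro i hi
        rcases eq_or_ne i x with rfl | hne
        · exact hx_mem
        · exact Submodule.subset_span (Finset.mem_erase.mpr ⟨hne, hi⟩)
      · exact_mod_cast Finset.erase_subset x s
    have hbot := ih (s.erase x) (by rw [Finset.card_erase_of_mem hxs, hcard]; omega) (by
      rw [← hspan_eq]; exact hle)
    rw [hspan_eq, hbot]

/-- Let `K` be a field and `A` a finite-dimensional `K`-algebra with Jacobson radical `J`,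
generated as a `K`-algebra by a set `G`. If `φ : A → A` is a `K`-algebra homomorphism with
`φ(g) − g ∈ J²` for every `g ∈ G`, then `φ` is a `K`-algebra automorphism (i.e. bijective). -/
theorem algHom_bijective_of_generators_fixed_mod_radical_sq
    (K : Type*) [Field K] (A : Type*) [Ring A] [Algebra K A] [FiniteDimensional K A]
    (G : Set A) (hG : Algebra.adjoin K G = ⊤)
    (φ : A →ₐ[K] A)
    (hφ : ∀ g ∈ G, φ g - g ∈
      ((Ideal.jacobson (⊥ : Ideal A)).restrictScalars K) *
        ((Ideal.jacobson (⊥ : Ideal A)).restrictScalars K)) :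
    Function.Bijective φ := by
  classical
  set Jid := Ideal.jacobson (⊥ : Ideal A) with hJid
  set JK : Submodule K A := Jid.restrictScalars K with hJKdef
  set S : Submodule K A := Subalgebra.toSubmodule φ.range with hSdef
  -- left stability of powers of JK under multiplication by A
  have lstab : ∀ (m : ℕ) (a x : A), x ∈ JK ^ (m + 1) → a * x ∈ JK ^ (m + 1) := by
    intro m a x hx
    rw [pow_succ'] at hx ⊢
    refine Submodule.mul_induction_on hx (fun u hu v hv => ?_) (fun y w hy hw => ?_)
    · rw [← mul_assoc]
      exact Submodule.mul_mem_mul (Ideal.mul_mem_left _ a hu) hv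
    · rw [mul_add]; exact add_mem hy hw
  -- right stability of powers of JK under multiplication by A
  have rstab : ∀ (m : ℕ) (x : A), x ∈ JK ^ (m + 1) → ∀ a : A, x * a ∈ JK ^ (m + 1) := by
    intro m x hx a
    rw [pow_succ] at hx ⊢
    refine Submodule.mul_induction_on hx (fun u hu v hv => ?_) (fun y w hy hw => ?_)
    · rw [mul_assoc]
      exact Submodule.mul_mem_mul hu (jac_mul_right hv a)
    · rw [add_mul]; exact add_mem hy hw
  have JKsq_le : JK * JK ≤ JK :=
    Submodule.mul_le.mpr fun u hu v hv => Ideal.mul_mem_left _ u hv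
  -- the image together with JK² is everything
  have htop2 : ∀ a : A, a ∈ S ⊔ JK ^ 2 := by
    intro a
    have ha : a ∈ Algebra.adjoin K G := by rw [hG]; trivial
    refine Algebra.adjoin_induction (p := fun x _ => x ∈ S ⊔ JK ^ 2) ?_ ?_ ?_ ?_ ha
    · intro g hg
      have h1 : φ g ∈ S := by
        rw [hSdef, Subalgebra.mem_toSubmodule]
        exact ⟨g, rfl⟩
      have h2 : φ g - g ∈ JK ^ 2 := by rw [sq]; exact hφ g hg
      have h3 := sub_mem (Submodule.mem_sup_left h1) (Submodule.mem_sup_right h2)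
      rwa [sub_sub_cancel] at h3
    · intro r
      refine Submodule.mem_sup_left ?_
      rw [hSdef, Subalgebra.mem_toSubmodule]
      exact Subalgebra.algebraMap_mem _ r
    · intro x y _ _ hx hy
      exact add_mem hx hy
    · intro x y _ _ hx hy
      obtain ⟨sx, hsx, px, hpx, hxe⟩ := Submodule.mem_sup.mp hx
      obtain ⟨sy, hsy, py, hpy, hye⟩ := Submodule.mem_sup.mp hy
      rw [← hxe, ← hye]
      have e : (sx + px) * (sy + py) = sx * sy + (sx * py + (px * sy + px * py)) := by
        noncomm_ring
      rw [e]
      refine add_mem (Submodule.mem_sup_left ?_) (Submodule.mem_sup_right ?_)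
      · rw [hSdef, Subalgebra.mem_toSubmodule] at hsx hsy ⊢
        exact mul_mem hsx hsy
      · have h2eq : JK ^ 2 = JK ^ (1 + 1) := by norm_num
        rw [h2eq] at hpx hpy ⊢
        exact add_mem (lstab 1 sx py hpy)
          (add_mem (rstab 1 px hpx sy) (rstab 1 px hpx py))
  have htop : S ⊔ JK ^ 2 = ⊤ := eq_top_iff.mpr fun a _ => htop2 a
  -- every element of JK decomposes
  have hdecomp : ∀ j : A, j ∈ JK → ∃ sj xj, sj ∈ S ∧ sj ∈ JK ∧ xj ∈ JK ^ 2 ∧ j = sj + xj := by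
    intro j hj
    obtain ⟨s, hs, p, hp, hsp⟩ := Submodule.mem_sup.mp (htop2 j)
    refine ⟨s, p, hs, ?_, hp, hsp.symm⟩
    have hpJ : p ∈ JK := JKsq_le (by rw [← sq]; exact hp)
    have hse : s = j - p := by rw [← hsp]; abel
    rw [hse]; exact sub_mem hj hpJ
  -- the key inclusion chain
  have hC : ∀ m : ℕ, JK ^ (m + 1) ≤ (S ⊓ JK ^ (m + 1)) ⊔ JK ^ (m + 2) := by
    intro m
    induction m with
    | zero =>
      intro j hj
      rw [pow_one] at hj
      obtain ⟨sj, xj, h1, h2, h3, hje⟩ := hdecomp j hj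
      rw [hje]
      exact add_mem
        (Submodule.mem_sup_left (Submodule.mem_inf.mpr ⟨h1, by rw [pow_one]; exact h2⟩))
        (Submodule.mem_sup_right h3)
    | succ m ih =>
      show JK ^ (m + 2) ≤ (S ⊓ JK ^ (m + 2)) ⊔ JK ^ (m + 3)
      have hstep : JK ^ (m + 2) = JK ^ (m + 1) * JK := pow_succ JK (m + 1)
      rw [hstep]
      refine Submodule.mul_le.mpr fun y hy j hj => ?_
      obtain ⟨sy, hsy, xy, hxy, hye⟩ := Submodule.mem_sup.mp (ih hy)
      obtain ⟨sj, xj, hsjS, hsjJ, hxj, hje⟩ := hdecomp j hj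
      obtain ⟨hsyS, hsyJ⟩ := Submodule.mem_inf.mp hsy
      rw [← hye, hje]
      have e : (sy + xy) * (sj + xj) = sy * sj + (sy * xj + xy * (sj + xj)) := by
        noncomm_ring
      rw [e]
      refine add_mem (Submodule.mem_sup_left ?_) (Submodule.mem_sup_right (add_mem ?_ ?_))
      · refine Submodule.mem_inf.mpr ⟨?_, ?_⟩
        · rw [hSdef, Subalgebra.mem_toSubmodule] at hsyS hsjS ⊢
          exact mul_mem hsyS hsjS
        · exact Submodule.mul_mem_mul hsyJ hsjJ
      · have h13 : JK ^ (m + 1) * JK ^ 2 = JK ^ (m + 3) := (pow_add JK (m + 1) 2).symm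
        rw [← h13]
        exact Submodule.mul_mem_mul hsyJ hxj
      · have h23 : JK ^ (m + 2) * JK = JK ^ (m + 3) := (pow_succ JK (m + 2)).symm
        rw [← h23]
        exact Submodule.mul_mem_mul hxy (hje ▸ hj)
  -- S together with any high power of JK is everything
  have htopn : ∀ k : ℕ, S ⊔ JK ^ (k + 2) = ⊤ := by
    intro k
    induction k with
    | zero => exact htop
    | succ k ih =>
      show S ⊔ JK ^ (k + 3) = ⊤
      rw [eq_top_iff, ← ih]
      refine sup_le le_sup_left (le_trans (hC (k + 1)) (sup_le ?_ ?_))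
      · exact le_trans inf_le_left le_sup_left
      · exact le_sup_right
  -- the chain of powers of JK stabilizes, hence JK is nilpotent by Nakayama
  have hdec : ∀ k : ℕ, JK ^ (k + 2) ≤ JK ^ (k + 1) := by
    intro k
    have h := pow_succ JK (k + 1)
    rw [h]
    exact Submodule.mul_le.mpr fun y hy j hj => rstab k y hy j
  have hanti : Antitone (fun k : ℕ => JK ^ (k + 1)) := antitone_nat_of_succ_le hdec
  let f : ℕ →o (Submodule K A)ᵒᵈ :=
    ⟨fun k => OrderDual.toDual (JK ^ (k + 1)), fun a b hab => hanti hab⟩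
  obtain ⟨n, hn⟩ := IsArtinian.monotone_stabilizes f
  have hstabeq : JK ^ (n + 1) = JK ^ (n + 2) :=
    congrArg OrderDual.ofDual (hn (n + 1) (by omega))
  obtain ⟨s, hs⟩ := IsNoetherian.noetherian (JK ^ (n + 1))
  have hspanle : ∀ x ∈ Submodule.span A ((s : Finset A) : Set A), x ∈ JK ^ (n + 1) := by
    have hN' : ∃ N' : Submodule A A, (N' : Set A) = (JK ^ (n + 1) : Submodule K A) := by
      refine ⟨{ carrier := (JK ^ (n + 1) : Submodule K A)
                add_mem' := fun h1 h2 => add_mem h1 h2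
                zero_mem' := zero_mem _
                smul_mem' := fun a x hx => lstab n a x hx }, rfl⟩
    obtain ⟨N', hN'⟩ := hN'
    intro x hx
    have hsub : (s : Set A) ⊆ N' := by
      rw [hN']
      intro y hy
      rw [← hs]
      exact Submodule.subset_span hy
    have := Submodule.span_le.mpr hsub hx
    rwa [← SetLike.mem_coe, hN'] at this
  have h2 : ∀ x ∈ JK ^ (n + 1), x ∈ Submodule.span A ((s : Finset A) : Set A) := by
    intro x hx
    have hxk : x ∈ Submodule.span K ((s : Finset A) : Set A) := by rw [hs]; exact hx
    have hle : Submodule.span K ((s : Finset A) : Set A) ≤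
        (Submodule.span A ((s : Finset A) : Set A)).restrictScalars K :=
      Submodule.span_le.mpr fun y hy => Submodule.subset_span hy
    exact hle hxk
  have hnak : Submodule.span A ((s : Finset A) : Set A) ≤
      Jid • Submodule.span A ((s : Finset A) : Set A) := by
    intro x hx
    have hxN : x ∈ JK ^ (n + 2) := hstabeq ▸ hspanle x hx
    have hx' : x ∈ JK * JK ^ (n + 1) := by
      rw [← pow_succ']
      exact hxN
    refine Submodule.mul_induction_on hx' (fun u hu v hv => ?_) (fun a b ha hb => ?_)
    · exact Submodule.smul_mem_smul hu (h2 v hv)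
    · exact add_mem ha hb
  have hbot := nak_aux s.card s rfl hnak
  have hNbot : JK ^ (n + 1) = ⊥ := by
    rw [eq_bot_iff]
    intro x hx
    have hx2 := h2 x hx
    rw [hbot] at hx2
    exact hx2
  have hlarge : JK ^ (n + 1 + 2) = ⊥ := by
    have h13 : JK ^ (n + 1 + 2) = JK ^ (n + 1) * JK ^ 2 := pow_add JK (n + 1) 2
    rw [h13, hNbot, Submodule.bot_mul]
  have hS : S = ⊤ := by
    have h := htopn (n + 1)
    rwa [hlarge, sup_bot_eq] at h
  have hrange : φ.range = ⊤ := Algebra.toSubmodule_eq_top.mp hS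
  have hsurj : Function.Surjective φ := by
    intro a
    have haR : a ∈ φ.range := by rw [hrange]; trivial
    obtain ⟨b, hb⟩ := haR
    exact ⟨b, hb⟩
  have hinj : Function.Injective φ :=
    (LinearMap.injective_iff_surjective (f := φ.toLinearMap)).mpr hsurj
  exact ⟨hinj, hsurj⟩
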